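/- Let e ≥ 1 and k ≥ 1. There exists a Λ-module of dimension k (i.e. a k-dimensional F₂-vector space V with a representation ρ : D → GL(V) and a vector x ∈ V such that ρ(g₂)x = x and V is generated by x as an R-module) if and only if k ≤ 2^(e+1). -/

import Mathlib

open Polynomial

namespace LMA

/-- A monoid hom from the dihedral group given generators satisfying the relations. -/
def dihedralHom {G : Type*} [Monoid G] (n : ℕ) [NeZero n] (T S : G)
    (hT : T ^ n = 1) (hS : S * S = 1) (hTS : T * S = S * T ^ (n - 1)) :
    DihedralGroup n →* G where
  toFun g := match g with
    | .r i => T ^ i.val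
    | .sr i => S * T ^ i.val
  map_one' := by
    show T ^ (0 : ZMod n).val = 1
    simp [ZMod.val_zero]
  map_mul' := by
    have hpow : ∀ p q : ℕ, (p : ZMod n) = (q : ZMod n) → T ^ p = T ^ q := by
      intro p q h
      rw [pow_eq_pow_mod p hT, pow_eq_pow_mod q hT]
      rw [ZMod.natCast_eq_natCast_iff'] at h
      rw [h]
    have hcomm : ∀ m : ℕ, T ^ m * S = S * T ^ ((n - 1) * m) := by
      intro m
      induction m with
      | zero => simp
      | succ m ih =>
        calc T ^ (m + 1) * S = T * (T ^ m * S) := by rw [pow_succ']; rw [mul_assoc]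
          _ = T * S * T ^ ((n - 1) * m) := by rw [ih, mul_assoc]
          _ = S * (T ^ (n - 1) * T ^ ((n - 1) * m)) := by rw [hTS, mul_assoc]
          _ = S * T ^ ((n - 1) * (m + 1)) := by
              rw [← pow_add]
              congr 1
              ring
    have hn1 : ((n - 1 : ℕ) : ZMod n) = -1 := by
      have h1 : 1 ≤ n := Nat.one_le_iff_ne_zero.mpr (NeZero.ne n)
      push_cast [Nat.cast_sub h1]
      simp
    rintro (i | i) (j | j)
    · show T ^ (i + j).val = T ^ i.val * T ^ j.val
      rw [← pow_add]
      apply hpow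
      push_cast [ZMod.natCast_val, ZMod.cast_id]
      ring
    · show S * T ^ (j - i).val = T ^ i.val * (S * T ^ j.val)
      rw [← mul_assoc, hcomm, mul_assoc, ← pow_add]
      congr 1
      apply hpow
      push_cast [ZMod.natCast_val, ZMod.cast_id, hn1]
      ring
    · show S * T ^ (i + j).val = S * T ^ i.val * T ^ j.val
      rw [mul_assoc, ← pow_add]
      congr 1
      apply hpow
      push_cast [ZMod.natCast_val, ZMod.cast_id]
      ring
    · show T ^ (j - i).val = S * T ^ i.val * (S * T ^ j.val)
      rw [mul_assoc, ← mul_assoc (T ^ i.val), hcomm, ← mul_assoc, ← mul_assoc, hS, one_mul,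
        ← pow_add]
      apply hpow
      push_cast [ZMod.natCast_val, ZMod.cast_id, hn1]
      ring

theorem dihedralHom_r {G : Type*} [Monoid G] (n : ℕ) [NeZero n] (T S : G)
    (hT : T ^ n = 1) (hS : S * S = 1) (hTS : T * S = S * T ^ (n - 1)) (i : ZMod n) :
    dihedralHom n T S hT hS hTS (.r i) = T ^ i.val := rfl

theorem dihedralHom_sr {G : Type*} [Monoid G] (n : ℕ) [NeZero n] (T S : G)
    (hT : T ^ n = 1) (hS : S * S = 1) (hTS : T * S = S * T ^ (n - 1)) (i : ZMod n) :
    dihedralHom n T S hT hS hTS (.sr i) = S * T ^ i.val := rfl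

end LMA

open Polynomial

namespace LMA2

variable (k : ℕ)

noncomputable abbrev A : Type := AdjoinRoot (X ^ k : Polynomial (ZMod 2))

noncomputable def a : A k := AdjoinRoot.root _

lemma a_pow : (a k) ^ k = 0 := by
  have h := AdjoinRoot.mk_self (f := (X ^ k : Polynomial (ZMod 2)))
  rwa [map_pow, AdjoinRoot.mk_X] at h

lemma nil_a : IsNilpotent (a k) := ⟨k, a_pow k⟩

noncomputable def u : (A k)ˣ := (nil_a k).isUnit_one_add.unit

lemma coe_u : (u k : A k) = 1 + a k := IsUnit.unit_spec _

lemma two_eq_zero : (2 : A k) = 0 := by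
  have h := map_ofNat (algebraMap (ZMod 2) (A k)) 2
  rw [show ((OfNat.ofNat 2 : ZMod 2)) = 0 by decide, map_zero] at h
  exact h.symm

lemma add_self (x : A k) : x + x = 0 := by
  rw [← two_mul, two_eq_zero, zero_mul]

noncomputable def b : A k := a k * ↑(u k)⁻¹

lemma hb : aeval (b k) (X ^ k : Polynomial (ZMod 2)) = 0 := by
  rw [map_pow, aeval_X, b, mul_pow, a_pow, zero_mul]

noncomputable def φ : A k →ₐ[ZMod 2] A k := AdjoinRoot.liftAlgHom _ (Algebra.ofId (ZMod 2) (A k)) (b k) (hb k)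

lemma φ_a : φ k (a k) = b k := by
  show φ k (AdjoinRoot.root _) = b k
  exact AdjoinRoot.liftAlgHom_root _ _ _ (hb k)

lemma φ_coe_u : φ k (u k : A k) = ((u k)⁻¹ : (A k)ˣ) := by
  rw [coe_u, map_add, map_one, φ_a]
  calc (1 : A k) + b k = (↑(u k) + a k) * ↑(u k)⁻¹ := by
        rw [add_mul, Units.mul_inv, b]
    _ = ↑(u k)⁻¹ := by rw [coe_u, add_assoc, add_self, add_zero, one_mul]

lemma φ_coe_uinv : φ k (↑(u k)⁻¹ : A k) = ↑(u k) := by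
  have h1 : φ k (↑(u k)⁻¹ : A k) * ↑(u k)⁻¹ = 1 := by
    have h2 : φ k (↑(u k)⁻¹ : A k) * φ k (↑(u k) : A k) = 1 := by
      rw [← map_mul, Units.inv_mul, map_one]
    rwa [φ_coe_u] at h2
  calc φ k (↑(u k)⁻¹ : A k) = φ k (↑(u k)⁻¹ : A k) * ↑(u k)⁻¹ * ↑(u k) := by
        rw [mul_assoc, Units.inv_mul, mul_one]
    _ = ↑(u k) := by rw [h1, one_mul]

lemma φ_b : φ k (b k) = a k := by
  rw [b, map_mul, φ_a, φ_coe_uinv, b, mul_assoc, Units.inv_mul, mul_one]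

lemma φφ : (φ k).comp (φ k) = AlgHom.id _ _ := by
  apply AdjoinRoot.algHom_ext
  rw [AlgHom.comp_apply]
  show φ k (φ k (a k)) = a k
  rw [φ_a, φ_b]

lemma φφ_apply (x : A k) : φ k (φ k x) = x := by
  have := DFunLike.congr_fun (φφ k) x
  simpa using this

end LMA2

open Polynomial

namespace LMAfinal

theorem main (e k : ℕ) (he : 1 ≤ e) (hk : 1 ≤ k) :
    (∃ (V : Type) (_ : AddCommGroup V) (_ : Module (ZMod 2) V)
      (ρ : Representation (ZMod 2) (DihedralGroup (2 ^ (e + 1))) V) (x : V),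
        ρ (DihedralGroup.sr 1) x = x ∧
        Submodule.span (ZMod 2)
          (Set.range fun g : DihedralGroup (2 ^ (e + 1)) => ρ g x) = ⊤ ∧
        Module.finrank (ZMod 2) V = k) ↔
      k ≤ 2 ^ (e + 1) := by
  have hnpos : 0 < 2 ^ (e + 1) := Nat.pow_pos (by norm_num)
  haveI : NeZero (2 ^ (e + 1)) := ⟨hnpos.ne'⟩
  constructor
  · rintro ⟨V, _, _, ρ, x, hfix, hspan, hrank⟩
    classical
    set f' : ZMod (2 ^ (e + 1)) → V := fun i => ρ (DihedralGroup.sr i) x with hf'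
    have hsub : (Set.range fun g : DihedralGroup (2 ^ (e + 1)) => ρ g x) ⊆ Set.range f' := by
      rintro _ ⟨g, rfl⟩
      cases g with
      | sr i => exact ⟨i, rfl⟩
      | r i =>
        refine ⟨1 - i, ?_⟩
        calc f' (1 - i) = ρ (DihedralGroup.r i * DihedralGroup.sr 1) x := by
              rw [DihedralGroup.r_mul_sr]
          _ = ρ (DihedralGroup.r i) (ρ (DihedralGroup.sr 1) x) := by
              rw [map_mul]; rfl
          _ = ρ (DihedralGroup.r i) x := by rw [hfix]
    have hspan2 : Submodule.span (ZMod 2) (Set.range f') = ⊤ :=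
      le_antisymm le_top (hspan ▸ Submodule.span_mono hsub)
    have h1 := finrank_span_le_card (R := ZMod 2) (Set.range f')
    rw [hspan2, finrank_top, hrank] at h1
    have h2 : (Set.range f').toFinset.card ≤ Fintype.card (ZMod (2 ^ (e + 1))) := by
      rw [Set.toFinset_range]
      exact Finset.card_image_le.trans (by simp)
    rw [ZMod.card] at h2
    exact h1.trans h2
  · intro hkn
    haveI : Nontrivial (LMA2.A k) := by
      refine AdjoinRoot.nontrivial _ ?_
      rw [degree_X_pow]
      exact_mod_cast Nat.one_le_iff_ne_zero.mp hk
    haveI : CharP (LMA2.A k) 2 := charP_of_injective_algebraMap' (ZMod 2) 2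
    set t : LMA2.A k := (↑(LMA2.u k) : LMA2.A k) with htdef
    have hapow : LMA2.a k ^ (2 ^ (e + 1)) = 0 := by
      rw [← Nat.add_sub_cancel' hkn, pow_add, LMA2.a_pow, zero_mul]
    have ht : t ^ (2 ^ (e + 1)) = 1 := by
      rw [htdef, LMA2.coe_u, add_pow_char_pow, one_pow, hapow, add_zero]
    have hu_pow : LMA2.u k ^ (2 ^ (e + 1)) = 1 := by
      ext
      rw [Units.val_pow_eq_pow_val]
      exact ht
    have huinv : (LMA2.u k)⁻¹ = LMA2.u k ^ (2 ^ (e + 1) - 1) := by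
      have h : LMA2.u k ^ (2 ^ (e + 1) - 1) * LMA2.u k = 1 := by
        rw [← pow_succ, Nat.sub_add_cancel hnpos, hu_pow]
      exact inv_eq_of_mul_eq_one_left h
    -- the two endomorphisms
    set M : Module.End (ZMod 2) (LMA2.A k) := LinearMap.mulLeft (ZMod 2) t with hMdef
    set S : Module.End (ZMod 2) (LMA2.A k) :=
      (LinearMap.mulLeft (ZMod 2) t) ∘ₗ (LMA2.φ k).toLinearMap with hSdef
    have hS_apply : ∀ y : LMA2.A k, S y = t * LMA2.φ k y := fun y => rfl
    have hM_apply : ∀ y : LMA2.A k, M y = t * y := fun y => rfl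
    have hMpow_apply : ∀ (m : ℕ) (y : LMA2.A k), (M ^ m) y = t ^ m * y := by
      intro m y
      rw [hMdef, LinearMap.pow_mulLeft]
      rfl
    have hφt : LMA2.φ k t = ↑(LMA2.u k)⁻¹ := LMA2.φ_coe_u k
    have hM : M ^ (2 ^ (e + 1)) = 1 := by
      rw [hMdef, LinearMap.pow_mulLeft, ht, LinearMap.mulLeft_one]
      rfl
    have hS : S * S = 1 := by
      apply LinearMap.ext
      intro y
      rw [Module.End.mul_apply, hS_apply, hS_apply, map_mul, hφt, LMA2.φφ_apply,
        ← mul_assoc, Module.End.one_apply]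
      rw [htdef, Units.mul_inv, one_mul]
    have hTS : M * S = S * M ^ (2 ^ (e + 1) - 1) := by
      apply LinearMap.ext
      intro y
      rw [Module.End.mul_apply, Module.End.mul_apply, hS_apply, hM_apply, hMpow_apply, hS_apply,
        map_mul, map_pow, hφt]
      have : (↑(LMA2.u k)⁻¹ : LMA2.A k) ^ (2 ^ (e + 1) - 1) = t := by
        rw [← Units.val_pow_eq_pow_val, inv_pow, ← huinv, inv_inv, htdef]
      rw [this, ← mul_assoc]
    set ρ : Representation (ZMod 2) (DihedralGroup (2 ^ (e + 1))) (LMA2.A k) :=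
      LMA.dihedralHom (2 ^ (e + 1)) M S hM hS hTS with hρdef
    refine ⟨LMA2.A k, inferInstance, inferInstance, ρ, 1, ?_, ?_, ?_⟩
    · -- fixed by sr 1
      haveI : Fact (1 < 2 ^ (e + 1)) := ⟨Nat.one_lt_two_pow (by omega)⟩
      rw [hρdef, LMA.dihedralHom_sr, Module.End.mul_apply, hMpow_apply, ZMod.val_one, pow_one,
        mul_one, hS_apply, hφt, htdef, Units.mul_inv]
    · -- spanning
      have hρr : ∀ m : ℕ, ρ (DihedralGroup.r (m : ZMod (2 ^ (e + 1)))) 1 = t ^ m := by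
        intro m
        rw [hρdef, LMA.dihedralHom_r, hMpow_apply, mul_one, ZMod.val_natCast,
          ← pow_eq_pow_mod m ht]
      have hadj : Algebra.adjoin (ZMod 2) ({t} : Set (LMA2.A k)) = ⊤ := by
        rw [eq_top_iff, ← AdjoinRoot.adjoinRoot_eq_top (f := (X ^ k : Polynomial (ZMod 2)))]
        apply Algebra.adjoin_le
        rw [Set.singleton_subset_iff]
        have hat : (AdjoinRoot.root (X ^ k : Polynomial (ZMod 2))) = t - 1 := by
          rw [htdef, LMA2.coe_u]
          show LMA2.a k = 1 + LMA2.a k - 1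
          ring
        rw [hat]
        exact sub_mem (Algebra.self_mem_adjoin_singleton _ t) (one_mem _)
      have hsub : (↑(Submonoid.closure ({t} : Set (LMA2.A k))) : Set (LMA2.A k)) ⊆
          Set.range fun g : DihedralGroup (2 ^ (e + 1)) => ρ g 1 := by
        intro y hy
        rw [SetLike.mem_coe, Submonoid.mem_closure_singleton] at hy
        obtain ⟨m, rfl⟩ := hy
        exact ⟨DihedralGroup.r (m : ZMod (2 ^ (e + 1))), hρr m⟩
      rw [eq_top_iff]
      intro y _
      have hy : y ∈ Submodule.span (ZMod 2)
          (↑(Submonoid.closure ({t} : Set (LMA2.A k))) : Set (LMA2.A k)) := by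
        rw [← Algebra.adjoin_eq_span, hadj]
        simp
      exact Submodule.span_mono hsub hy
    · -- finrank
      rw [(AdjoinRoot.powerBasis' (monic_X_pow k (R := ZMod 2))).finrank]
      exact natDegree_X_pow k

end LMAfinal

/-- Let `e ≥ 1` and `k ≥ 1`.  Let `D` be the dihedral group of order
`2^(e+2)` with reflections `g₁ = sr 0`, `g₂ = sr 1`.  A `Λ`-module of dimension `k` (an
`F₂`-vector space `V` with a representation `ρ : D → GL(V)` and `x ∈ V` with `ρ(g₂) x = x`
and `V = R·x` for `R = F₂[D]`, of `F₂`-dimension `k`) exists iff `k ≤ 2^(e+1)`. -/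
theorem lambda_module_exists_iff (e k : ℕ) (he : 1 ≤ e) (hk : 1 ≤ k) :
    (∃ (V : Type) (_ : AddCommGroup V) (_ : Module (ZMod 2) V)
      (ρ : Representation (ZMod 2) (DihedralGroup (2 ^ (e + 1))) V) (x : V),
        ρ (DihedralGroup.sr 1) x = x ∧
        Submodule.span (ZMod 2)
          (Set.range fun g : DihedralGroup (2 ^ (e + 1)) => ρ g x) = ⊤ ∧
        Module.finrank (ZMod 2) V = k) ↔
      k ≤ 2 ^ (e + 1) := by
  exact LMAfinal.main e k he hk
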